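/- Let R be a PID and I₁,…,I_r ideals of R[x₁,…,xₙ] with generators f_k. For each j choose a generator f_{k_j} of I_j. Then the kernel of the presentation φ : R[x][{T_{k,j}}] → R[x][I₁t₁,…,I_rt_r], T_{k,j} ↦ f_k t_j, equals the saturation L : (∏_j f_{k_j})^∞ where L = ⟨{ f_{k_j}T_{k,j} − f_k T_{k_j,j} : all j, all generators f_k of I_j }⟩. -/

import Mathlib

open MvPolynomial


lemma aeval_scale_injective {A : Type*} [CommRing A] [IsDomain A] {σ : Type*}
    (b : σ → A) (hb : ∀ i, b i ≠ 0) :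
    Function.Injective (aeval (R := A) (S₁ := MvPolynomial σ A)
      (fun i => C (b i) * X i)) := by
  set K := FractionRing A
  have hι : Function.Injective (algebraMap A K) := IsFractionRing.injective A K
  set m : MvPolynomial σ A →+* MvPolynomial σ K := MvPolynomial.map (algebraMap A K) with hmdef
  have hm : Function.Injective m := MvPolynomial.map_injective _ hι
  set θK : MvPolynomial σ K →ₐ[K] MvPolynomial σ K :=
    aeval (fun i => C (algebraMap A K (b i)) * X i) with hθKdef
  have hbK : ∀ i, algebraMap A K (b i) ≠ 0 := fun i h =>
    hb i (hι (h.trans (map_zero _).symm))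
  have hcomm : m.comp ((aeval (R := A) (fun i => C (b i) * X i)) :
      MvPolynomial σ A →ₐ[A] MvPolynomial σ A).toRingHom
      = (θK.toRingHom).comp m := by
    apply MvPolynomial.ringHom_ext
    · intro a; simp [hmdef, hθKdef]
    · intro i; simp [hmdef, hθKdef]
  set σinv : MvPolynomial σ K →ₐ[K] MvPolynomial σ K :=
    aeval (fun i => C (algebraMap A K (b i))⁻¹ * X i) with hσdef
  have hinv : σinv.comp θK = AlgHom.id K _ := by
    apply MvPolynomial.algHom_ext
    intro i
    rw [AlgHom.comp_apply, AlgHom.id_apply, hθKdef, aeval_X, map_mul, hσdef, aeval_X, aeval_C]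
    rw [algebraMap_eq, ← mul_assoc, ← C_mul, mul_inv_cancel₀ (hbK i), C_1, one_mul]
  intro x y hxy
  apply hm
  have hx := RingHom.congr_fun hcomm x
  have hy := RingHom.congr_fun hcomm y
  simp only [RingHom.comp_apply, RingHom.coe_coe, AlgHom.toRingHom_eq_coe] at hx hy
  have h2 : θK (m x) = θK (m y) := by rw [← hx, ← hy, hxy]
  have hx2 := AlgHom.congr_fun hinv (m x)
  have hy2 := AlgHom.congr_fun hinv (m y)
  simp only [AlgHom.comp_apply, AlgHom.id_apply] at hx2 hy2
  rw [← hx2, ← hy2, h2]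

lemma rees_key {R : Type*} [CommRing R] (n r : ℕ) (κ : Type*)
    (f : κ → MvPolynomial (Fin n) R) (jdx : κ → Fin r) (kj : Fin r → κ)
    (L : Ideal (MvPolynomial κ (MvPolynomial (Fin n) R)))
    (hL : L = Ideal.span (Set.range (fun k =>
        C (f (kj (jdx k))) * X k - C (f k) * X (kj (jdx k)))))
    (q : MvPolynomial κ (MvPolynomial (Fin n) R)) :
    ∃ (N : ℕ) (p : MvPolynomial (Fin r) (MvPolynomial (Fin n) R)),
      Ideal.Quotient.mk L (C ((∏ j : Fin r, f (kj j)) ^ N) * q)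
        = Ideal.Quotient.mk L (aeval (fun j => X (kj j)) p) := by
  set g : MvPolynomial (Fin n) R := ∏ j : Fin r, f (kj j) with hg
  set ψ : MvPolynomial (Fin r) (MvPolynomial (Fin n) R) →ₐ[MvPolynomial (Fin n) R]
      MvPolynomial κ (MvPolynomial (Fin n) R) := aeval (fun j => X (kj j)) with hψ
  have hψC : ∀ a : MvPolynomial (Fin n) R, ψ (C a) = C a := fun a => by
    rw [hψ, ← algebraMap_eq, AlgHom.commutes, algebraMap_eq]
  set mk := Ideal.Quotient.mk L with hmk
  induction q using MvPolynomial.induction_on with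
  | C a =>
      exact ⟨0, C a, by rw [hψC, pow_zero, C_1, one_mul]⟩
  | add p q hp hq =>
      obtain ⟨N₁, p₁, h₁⟩ := hp
      obtain ⟨N₂, p₂, h₂⟩ := hq
      refine ⟨N₁ + N₂, C (g ^ N₂) * p₁ + C (g ^ N₁) * p₂, ?_⟩
      have e : C (g ^ (N₁ + N₂)) * (p + q)
          = C (g ^ N₂) * (C (g ^ N₁) * p) + C (g ^ N₁) * (C (g ^ N₂) * q) := by
        rw [pow_add, map_mul]; ring
      rw [e, mk.map_add, mk.map_mul (C (g ^ N₂)) (C (g ^ N₁) * p),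
        mk.map_mul (C (g ^ N₁)) (C (g ^ N₂) * q), h₁, h₂, ← mk.map_mul, ← mk.map_mul,
        ← mk.map_add]
      congr 1
      rw [map_add ψ, map_mul ψ, map_mul ψ, hψC, hψC]
  | mul_X p k hp =>
      obtain ⟨N, p', h⟩ := hp
      set h₀ : MvPolynomial (Fin n) R := ∏ j ∈ Finset.univ.erase (jdx k), f (kj j) with hh₀
      refine ⟨N + 1, p' * (C (f k * h₀) * X (jdx k)), ?_⟩
      have hgsplit : g = f (kj (jdx k)) * h₀ := by
        rw [hg, hh₀]
        exact (Finset.mul_prod_erase Finset.univ (fun j => f (kj j))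
          (Finset.mem_univ (jdx k))).symm
      have hmem : C g * X k - C (f k * h₀) * X (kj (jdx k)) ∈ L := by
        have e2 : C g * X k - C (f k * h₀) * X (kj (jdx k))
            = C h₀ * (C (f (kj (jdx k))) * X k - C (f k) * X (kj (jdx k))) := by
          rw [hgsplit, map_mul, map_mul]; ring
        rw [e2, hL]
        exact Ideal.mul_mem_left _ _ (Ideal.subset_span ⟨k, rfl⟩)
      have hmkeq : mk (C g * X k) = mk (C (f k * h₀) * X (kj (jdx k))) := by
        rw [hmk, Ideal.Quotient.mk_eq_mk_iff_sub_mem]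
        exact hmem
      have e : C (g ^ (N + 1)) * (p * X k) = (C (g ^ N) * p) * (C g * X k) := by
        rw [pow_succ, map_mul]; ring
      rw [e, mk.map_mul (C (g ^ N) * p) (C g * X k), h, hmkeq, ← mk.map_mul]
      refine congrArg mk ?_
      rw [map_mul ψ, map_mul ψ, hψC, hψ]
      rw [aeval_X]


/-- Theorem 3.11 (equations of the multi-Rees algebra over a PID): let `R` be a PID and
`I₁,…,I_r` ideals of `R[x₁,…,xₙ]` with generators `f_k` (indexed by `κ`, with block map
`jdx`), and for each `j` a distinguished nonzero generator `f_{k_j}`.  Let `L` be the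
ideal generated by the Koszul relations `f_{k_j}T_{k,j} − f_k T_{k_j,j}`.  Then the
kernel of the presentation `φ : R[x][{T_{k,j}}] → R[x][I₁t₁,…,I_rt_r]`, `T_{k,j} ↦ f_k tⱼ`,
equals the saturation `L : (∏_j f_{k_j})^∞`. -/
theorem stmt13 {R : Type*} [CommRing R] [IsDomain R] [IsPrincipalIdealRing R]
    (n r : ℕ) (κ : Type*) (f : κ → MvPolynomial (Fin n) R)
    (jdx : κ → Fin r) (kj : Fin r → κ) (hkj : ∀ j, jdx (kj j) = j)
    (hne : ∀ j, f (kj j) ≠ 0) :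
    letI φ : MvPolynomial κ (MvPolynomial (Fin n) R) →ₐ[MvPolynomial (Fin n) R]
        MvPolynomial (Fin r) (MvPolynomial (Fin n) R) :=
      aeval (fun k => C (f k) * X (jdx k))
    letI L : Ideal (MvPolynomial κ (MvPolynomial (Fin n) R)) :=
      Ideal.span (Set.range (fun k =>
        C (f (kj (jdx k))) * X k - C (f k) * X (kj (jdx k))))
    ∀ q : MvPolynomial κ (MvPolynomial (Fin n) R),
      φ q = 0 ↔ ∃ ℓ : ℕ, C ((∏ j : Fin r, f (kj j)) ^ ℓ) * q ∈ L := by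
  intro q
  set φ : MvPolynomial κ (MvPolynomial (Fin n) R) →ₐ[MvPolynomial (Fin n) R]
      MvPolynomial (Fin r) (MvPolynomial (Fin n) R) :=
    aeval (fun k => C (f k) * X (jdx k)) with hφ
  set L : Ideal (MvPolynomial κ (MvPolynomial (Fin n) R)) :=
    Ideal.span (Set.range (fun k =>
      C (f (kj (jdx k))) * X k - C (f k) * X (kj (jdx k)))) with hLdef
  set g : MvPolynomial (Fin n) R := ∏ j : Fin r, f (kj j) with hg
  have hgne : g ≠ 0 := Finset.prod_ne_zero_iff.mpr (fun j _ => hne j)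
  have hφC : ∀ a : MvPolynomial (Fin n) R, φ (C a) = C a := fun a => by
    have h := φ.commutes a
    simp only [algebraMap_eq] at h
    exact h
  have hφL : ∀ h ∈ L, φ h = 0 := by
    intro h hh
    have hle : L ≤ RingHom.ker (φ : MvPolynomial κ (MvPolynomial (Fin n) R) →+*
        MvPolynomial (Fin r) (MvPolynomial (Fin n) R)) := by
      rw [hLdef, Ideal.span_le]
      rintro _ ⟨k, rfl⟩
      simp only [SetLike.mem_coe, RingHom.mem_ker, AlgHom.toRingHom_eq_coe, RingHom.coe_coe,
        map_sub, map_mul, hφ, aeval_X, aeval_C, algebraMap_eq, hkj]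
      ring
    exact hle hh
  constructor
  · intro hq
    obtain ⟨N, p, hNp⟩ := rees_key n r κ f jdx kj L hLdef q
    refine ⟨N, ?_⟩
    have hsub : C (g ^ N) * q - aeval (fun j => X (kj j)) p ∈ L := by
      rw [← Ideal.Quotient.mk_eq_mk_iff_sub_mem]
      exact hNp
    have h0 : φ (aeval (fun j => X (kj j)) p) = 0 := by
      have := hφL _ hsub
      rw [map_sub, map_mul, hφC, hq, mul_zero, zero_sub, neg_eq_zero] at this
      exact this
    have hcomp : φ ((aeval (fun j => X (kj j)) : MvPolynomial (Fin r)
        (MvPolynomial (Fin n) R) →ₐ[MvPolynomial (Fin n) R] _) p)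
        = aeval (fun j => C (f (kj j)) * X j) p := by
      rw [← AlgHom.comp_apply]
      congr 1
      apply MvPolynomial.algHom_ext
      intro j
      simp only [AlgHom.comp_apply, aeval_X, hφ, hkj]
    have hp0 : p = 0 := by
      apply aeval_scale_injective (fun j => f (kj j)) hne
      rw [← hcomp]
      simpa using h0
    rw [hp0, map_zero, sub_zero] at hsub
    exact hsub
  · rintro ⟨ℓ, hℓ⟩
    have := hφL _ hℓ
    rw [map_mul, hφC] at this
    rcases mul_eq_zero.mp this with h | h
    · exact absurd (by simpa using h) (pow_ne_zero ℓ hgne)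
    · exact h
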